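/- Positive-real preservation under shift for p-passive systems: if the LMI [[AᵀP + PA + 2λP + εI, PB − Cᵀ],[BᵀP − C, −D − Dᵀ]] ≤ 0 holds with P symmetric invertible and ε ≥ 0, then G(jω−λ) + G(jω−λ)* ≥ 0 for all real ω with jωI − (A+λI) invertible, where G(s) = C(sI−A)⁻¹B + D. -/

import Mathlib

open Matrix ComplexOrder

namespace ShiftedPRAux

lemma cmap_mul {k l p : Type*} [Fintype l] (X : Matrix k l ℝ) (Y : Matrix l p ℝ) :
    (X * Y).map Complex.ofReal = X.map Complex.ofReal * Y.map Complex.ofReal := by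
  ext i j; simp [Matrix.mul_apply, Matrix.map_apply]

lemma cmap_add {k l : Type*} (X Y : Matrix k l ℝ) :
    (X + Y).map Complex.ofReal = X.map Complex.ofReal + Y.map Complex.ofReal := by
  ext i j; simp

lemma cmap_sub {k l : Type*} (X Y : Matrix k l ℝ) :
    (X - Y).map Complex.ofReal = X.map Complex.ofReal - Y.map Complex.ofReal := by
  ext i j; simp

lemma cmap_neg {k l : Type*} (X : Matrix k l ℝ) :
    (-X).map Complex.ofReal = -(X.map Complex.ofReal) := by
  ext i j; simp

lemma cmap_smul {k l : Type*} (r : ℝ) (X : Matrix k l ℝ) :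
    (r • X).map Complex.ofReal = (r : ℂ) • X.map Complex.ofReal := by
  ext i j; simp

lemma cmap_one {k : Type*} [Fintype k] [DecidableEq k] :
    (1 : Matrix k k ℝ).map Complex.ofReal = 1 := by
  ext i j; simp [Matrix.one_apply]; split_ifs <;> simp

lemma cmapT {k l : Type*} (X : Matrix k l ℝ) :
    (X.map Complex.ofReal)ᴴ = Xᵀ.map Complex.ofReal := by
  ext i j
  simp [Matrix.conjTranspose_apply, Complex.conj_ofReal]

lemma cmapH {k l : Type*} (X : Matrix k l ℝ) :
    Xᴴ.map Complex.ofReal = (X.map Complex.ofReal)ᴴ := by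
  ext i j
  simp [Matrix.conjTranspose_apply, Complex.conj_ofReal]

end ShiftedPRAux

open ShiftedPRAux

/-- Positive-real preservation under shift for p-passive systems: if the LMI
`[[AᵀP + PA + 2λP + εI, PB - Cᵀ], [BᵀP - C, -D - Dᵀ]] ≤ 0` holds with `P` symmetric
invertible, then `G(jω - λ) + G(jω - λ)* ≥ 0` for every real `ω` with
`jωI - (A + λI)` invertible, where `G(s) = C(sI - A)⁻¹B + D`. -/
theorem shifted_positive_real
    {n m : ℕ} (A : Matrix (Fin n) (Fin n) ℝ) (B : Matrix (Fin n) (Fin m) ℝ)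
    (C : Matrix (Fin m) (Fin n) ℝ) (D : Matrix (Fin m) (Fin m) ℝ)
    (P : Matrix (Fin n) (Fin n) ℝ) (hPsym : P.IsHermitian) (hPinv : IsUnit P)
    (lam ε : ℝ) (hlam : 0 ≤ lam) (hε : 0 ≤ ε)
    (hLMI : (-(Matrix.fromBlocks
        (Aᵀ * P + P * A + (2 * lam) • P + ε • 1)
        (P * B - Cᵀ)
        (Bᵀ * P - C)
        (-D - Dᵀ))).PosSemidef) :
    ∀ ω : ℝ,
      IsUnit ((Complex.I * ω) • (1 : Matrix (Fin n) (Fin n) ℂ)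
          - (A + lam • 1).map Complex.ofReal) →
      ∀ G : Matrix (Fin m) (Fin m) ℂ,
        G = C.map Complex.ofReal *
              ((Complex.I * ω - lam) • (1 : Matrix (Fin n) (Fin n) ℂ)
                - A.map Complex.ofReal)⁻¹ * B.map Complex.ofReal
            + D.map Complex.ofReal →
        (G + Gᴴ).PosSemidef := by
  intro ω hinv G hG
  set s : ℂ := Complex.I * ω - lam with hs_def
  set A₁ := A.map Complex.ofReal with hA₁
  set B₁ := B.map Complex.ofReal with hB₁
  set C₁ := C.map Complex.ofReal with hC₁
  set D₁ := D.map Complex.ofReal with hD₁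
  set P₁ := P.map Complex.ofReal with hP₁
  set M : Matrix (Fin n) (Fin n) ℂ := s • 1 - A₁ with hMdef
  -- the invertibility hypothesis is about `M`
  have hshift : (A + lam • 1).map Complex.ofReal = A₁ + (lam : ℂ) • 1 := by
    rw [cmap_add, cmap_smul, cmap_one, hA₁]
  have hMeq : (Complex.I * ω) • (1 : Matrix (Fin n) (Fin n) ℂ)
      - (A + lam • 1).map Complex.ofReal = M := by
    rw [hshift, hMdef, hs_def, sub_smul]
    abel
  rw [hMeq] at hinv
  have hMdet : IsUnit M.det := (Matrix.isUnit_iff_isUnit_det M).mp hinv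
  have hMM : M * M⁻¹ = 1 := Matrix.mul_nonsing_inv M hMdet
  -- complexified LMI
  obtain ⟨L, hL⟩ : ∃ L : Matrix (Fin n ⊕ Fin m) (Fin n ⊕ Fin m) ℝ, (-(Matrix.fromBlocks
        (Aᵀ * P + P * A + (2 * lam) • P + ε • 1)
        (P * B - Cᵀ)
        (Bᵀ * P - C)
        (-D - Dᵀ))) = Lᴴ * L := by
    open scoped MatrixOrder in
    obtain ⟨L, hL⟩ := CStarAlgebra.nonneg_iff_eq_star_mul_self.mp hLMI.nonneg
    exact ⟨L, hL⟩
  set W₁ : Matrix (Fin n ⊕ Fin m) (Fin n ⊕ Fin m) ℂ :=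
    (-(Matrix.fromBlocks
        (Aᵀ * P + P * A + (2 * lam) • P + ε • 1)
        (P * B - Cᵀ)
        (Bᵀ * P - C)
        (-D - Dᵀ))).map Complex.ofReal with hW₁
  have hWps : W₁.PosSemidef := by
    rw [hW₁, hL, cmap_mul, cmapH]
    exact Matrix.posSemidef_conjTranspose_mul_self _
  have hW₁blocks : W₁ = Matrix.fromBlocks
      (-(Aᵀ.map Complex.ofReal * P₁ + P₁ * A₁ + ((2*lam : ℝ) : ℂ) • P₁ + ((ε : ℝ) : ℂ) • 1))
      (-(P₁ * B₁ - Cᵀ.map Complex.ofReal))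
      (-(Bᵀ.map Complex.ofReal * P₁ - C₁))
      (D₁ + Dᵀ.map Complex.ofReal) := by
    rw [hW₁, Matrix.fromBlocks_neg, Matrix.fromBlocks_map]
    simp only [cmap_mul, cmap_add, cmap_sub, cmap_neg, cmap_smul, cmap_one,
      hA₁, hB₁, hC₁, hD₁, hP₁]
    congr 1
    all_goals try abel
  rw [Matrix.posSemidef_iff_dotProduct_mulVec]
  constructor
  · rw [Matrix.IsHermitian, Matrix.conjTranspose_add, Matrix.conjTranspose_conjTranspose,
      add_comm]
  -- helper rewrites (stated for arbitrary vectors, before `x` is introduced)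
  have hconjA : ∀ (v : Fin n → ℂ) (w : Fin n → ℂ),
      star v ⬝ᵥ (Aᵀ.map Complex.ofReal *ᵥ w) = star (A₁ *ᵥ v) ⬝ᵥ w := by
    intro v w
    rw [Matrix.star_mulVec, ← Matrix.dotProduct_mulVec, hA₁, cmapT]
  have hconjB : ∀ (v : Fin m → ℂ) (w : Fin n → ℂ),
      star v ⬝ᵥ (Bᵀ.map Complex.ofReal *ᵥ w) = star (B₁ *ᵥ v) ⬝ᵥ w := by
    intro v w
    rw [Matrix.star_mulVec, ← Matrix.dotProduct_mulVec, hB₁, cmapT]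
  have hconjC : ∀ (v : Fin n → ℂ) (w : Fin m → ℂ),
      star v ⬝ᵥ (Cᵀ.map Complex.ofReal *ᵥ w) = star (C₁ *ᵥ v) ⬝ᵥ w := by
    intro v w
    rw [Matrix.star_mulVec, ← Matrix.dotProduct_mulVec, hC₁, cmapT]
  have hconjD : ∀ (v : Fin m → ℂ) (w : Fin m → ℂ),
      star v ⬝ᵥ (Dᵀ.map Complex.ofReal *ᵥ w) = star (D₁ *ᵥ v) ⬝ᵥ w := by
    intro v w
    rw [Matrix.star_mulVec, ← Matrix.dotProduct_mulVec, hD₁, cmapT]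
  intro u
  set x : Fin n → ℂ := M⁻¹ *ᵥ (B₁ *ᵥ u) with hxdef
  have hx : M *ᵥ x = B₁ *ᵥ u := by
    rw [hxdef, Matrix.mulVec_mulVec, hMM, Matrix.one_mulVec]
  have hAx : A₁ *ᵥ x = s • x - B₁ *ᵥ u := by
    have h1 : s • x - A₁ *ᵥ x = B₁ *ᵥ u := by
      rw [← hx, hMdef, Matrix.sub_mulVec, Matrix.smul_mulVec, Matrix.one_mulVec]
    rw [← h1]; try abel
  have hGu : G *ᵥ u = C₁ *ᵥ x + D₁ *ᵥ u := by
    rw [hG, Matrix.add_mulVec, ← Matrix.mulVec_mulVec, ← Matrix.mulVec_mulVec]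
    try rfl
  -- key quadratic form from the LMI
  set z : Fin n ⊕ Fin m → ℂ := Sum.elim x u with hz
  have hstarz : star z = Sum.elim (star x) (star u) := by
    funext i; cases i <;> rfl
  have hSnonneg : 0 ≤ star z ⬝ᵥ (W₁ *ᵥ z) := hWps.dotProduct_mulVec_nonneg z
  have hsum : s + star s = -((2 * lam : ℝ) : ℂ) := by
    rw [hs_def]
    simp [Complex.ext_iff]
    try ring
  -- the main identity
  have hmain : star u ⬝ᵥ ((G + Gᴴ) *ᵥ u)
      = ((ε : ℝ) : ℂ) * (star x ⬝ᵥ x) + star z ⬝ᵥ (W₁ *ᵥ z) := by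
    have hGHu : star u ⬝ᵥ (Gᴴ *ᵥ u) = star (C₁ *ᵥ x) ⬝ᵥ u + star (D₁ *ᵥ u) ⬝ᵥ u := by
      rw [Matrix.dotProduct_mulVec, ← Matrix.star_mulVec, hGu, star_add,
        add_dotProduct]
    rw [Matrix.add_mulVec, dotProduct_add, hGu, hGHu, hW₁blocks, hz,
      Matrix.fromBlocks_mulVec, hstarz, sumElim_dotProduct_sumElim]
    simp only [Sum.elim_comp_inl, Sum.elim_comp_inr]
    simp only [Matrix.neg_mulVec, Matrix.add_mulVec, Matrix.sub_mulVec,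
      Matrix.smul_mulVec, Matrix.one_mulVec, ← Matrix.mulVec_mulVec,
      dotProduct_add, dotProduct_sub, dotProduct_neg,
      dotProduct_smul, smul_eq_mul]
    rw [hconjA x, hconjC x, hconjB u]
    rw [show P₁ *ᵥ (A₁ *ᵥ x) = P₁ *ᵥ (s • x - B₁ *ᵥ u) by rw [hAx], hAx]
    rw [show star (s • x - B₁ *ᵥ u) = star s • star x - star (B₁ *ᵥ u) by
      rw [star_sub, star_smul]; try rfl]
    rw [Matrix.mulVec_sub, Matrix.mulVec_smul]
    simp only [sub_dotProduct, dotProduct_sub, smul_dotProduct,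
      dotProduct_smul, smul_eq_mul]
    rw [show star (B₁ *ᵥ u) ⬝ᵥ (P₁ *ᵥ x) = star u ⬝ᵥ (Bᵀ.map Complex.ofReal *ᵥ (P₁ *ᵥ x)) by
      rw [hconjB u]]
    rw [show star (C₁ *ᵥ x) ⬝ᵥ u = star x ⬝ᵥ (Cᵀ.map Complex.ofReal *ᵥ u) by rw [hconjC x]]
    rw [show star (D₁ *ᵥ u) ⬝ᵥ u = star u ⬝ᵥ (Dᵀ.map Complex.ofReal *ᵥ u) by rw [hconjD u]]
    have hst : star s * (star x ⬝ᵥ (P₁ *ᵥ x)) + s * (star x ⬝ᵥ (P₁ *ᵥ x))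
        + ((2 * lam : ℝ) : ℂ) * (star x ⬝ᵥ (P₁ *ᵥ x)) = 0 := by
      have h0 : star s + s + ((2 * lam : ℝ) : ℂ) = 0 := by
        rw [add_comm (star s) s, hsum]; ring
      linear_combination (star x ⬝ᵥ (P₁ *ᵥ x)) * h0
    linear_combination hst
  rw [hmain]
  have h1 : 0 ≤ ((ε : ℝ) : ℂ) * (star x ⬝ᵥ x) := by
    apply mul_nonneg
    · exact_mod_cast hε
    · exact dotProduct_star_self_nonneg x
  exact add_nonneg h1 hSnonneg
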